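/- Let a > 0, P > 0, σ > 0, let g ∈ ℂ^{N_R×N_T} with operator norm ‖g‖ ≤ a, and let t_1,…,t_n ∈ ℂ^{N_T} satisfy (1/n) ∑_{i=1}^n ‖t_i‖² ≤ P. Let ξ_1,…,ξ_n be independent, identically distributed centered circularly-symmetric complex Gaussian vectors in ℂ^{N_R} with covariance matrix σ² I_{N_R}, and set Z_i = g t_i + ξ_i. Then ℙ[∑_{i=1}^n ‖Z_i‖² ≥ n(2a²P + 2N_Rσ² + 2)] ≤ ((1 + 1/(σ²N_R)) · 2^{−1/(σ²N_R ln 2)})^n. -/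

import Mathlib

open MeasureTheory ProbabilityTheory
open scoped ENNReal

section Aux
open Real
open scoped NNReal

lemma aux_integrable_exp_sq_gaussian (v : NNReal) (hv : 0 < (v : ℝ)) {s : ℝ}
    (hs : 2 * s * v < 1) :
    Integrable (fun x => Real.exp (s * x ^ 2)) (gaussianReal 0 v) := by
  have hv0 : v ≠ 0 := by exact_mod_cast hv.ne'
  have hb : 0 < 1 / (2 * (v : ℝ)) - s := by
    rw [sub_pos, lt_div_iff₀ (by positivity)]
    linarith [hs]
  rw [gaussianReal_of_var_ne_zero _ hv0]
  have hpdf : gaussianPDF 0 v = fun x => ((gaussianPDFReal 0 v x).toNNReal : ENNReal) := by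
    funext x; rfl
  rw [hpdf, integrable_withDensity_iff_integrable_smul
    ((measurable_gaussianPDFReal 0 v).real_toNNReal)]
  have : (fun x => ((gaussianPDFReal 0 v x).toNNReal : NNReal) • Real.exp (s * x ^ 2))
      = fun x => (Real.sqrt (2 * Real.pi * v))⁻¹ * Real.exp (-(1 / (2 * (v:ℝ)) - s) * x ^ 2) := by
    funext x
    rw [NNReal.smul_def, smul_eq_mul, Real.coe_toNNReal _ (gaussianPDFReal_nonneg 0 v x),
      gaussianPDFReal]
    rw [mul_assoc, ← Real.exp_add]
    ring_nf
  rw [this]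
  exact (integrable_exp_neg_mul_sq hb).const_mul _

lemma aux_integral_exp_sq_gaussian (v : NNReal) (hv : 0 < (v : ℝ)) {s : ℝ}
    (hs : 2 * s * v < 1) :
    ∫ x, Real.exp (s * x ^ 2) ∂(gaussianReal 0 v)
      = (Real.sqrt (1 - 2 * s * v))⁻¹ := by
  have hv0 : v ≠ 0 := by exact_mod_cast hv.ne'
  have hb : 0 < 1 / (2 * (v : ℝ)) - s := by
    rw [sub_pos, lt_div_iff₀ (by positivity)]
    linarith [hs]
  set b : ℝ := 1 / (2 * (v : ℝ)) - s with hbdef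
  rw [gaussianReal_of_var_ne_zero _ hv0]
  have hpdf : gaussianPDF 0 v = fun x => ((gaussianPDFReal 0 v x).toNNReal : ENNReal) := by
    funext x; rfl
  rw [hpdf, integral_withDensity_eq_integral_smul
    ((measurable_gaussianPDFReal 0 v).real_toNNReal)]
  have heq : (fun x => ((gaussianPDFReal 0 v x).toNNReal : NNReal) • Real.exp (s * x ^ 2))
      = fun x : ℝ => (Real.sqrt (2 * Real.pi * v))⁻¹ * Real.exp (-b * x ^ 2) := by
    funext x
    rw [NNReal.smul_def, smul_eq_mul, Real.coe_toNNReal _ (gaussianPDFReal_nonneg 0 v x),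
      gaussianPDFReal]
    rw [mul_assoc, ← Real.exp_add]
    rw [hbdef]; ring_nf
  rw [heq, integral_const_mul, integral_gaussian]
  have hπ := Real.pi_pos
  have h2vb : 2 * (v:ℝ) * b = 1 - 2 * s * v := by rw [hbdef]; field_simp
  have h1 : Real.pi / b = (2 * Real.pi * (v:ℝ)) * (1 - 2 * s * (v:ℝ))⁻¹ := by
    rw [← h2vb]; field_simp
  rw [h1]
  have e1 : Real.sqrt (2 * Real.pi * ↑v * (1 - 2 * s * ↑v)⁻¹)
      = (Real.sqrt (2 * Real.pi) * Real.sqrt ↑v) * (Real.sqrt (1 - 2 * s * ↑v))⁻¹ := by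
    rw [Real.sqrt_mul (by positivity), Real.sqrt_mul (by positivity), Real.sqrt_inv]
  rw [e1, show Real.sqrt (2 * Real.pi * ↑v) = Real.sqrt (2 * Real.pi) * Real.sqrt ↑v from
    Real.sqrt_mul (by positivity) _, inv_mul_cancel_left₀ (by positivity)]
end Aux

/-- The operator norm of a complex matrix with respect to the Euclidean norms. -/
noncomputable def matOpNorm {nR nT : ℕ} (g : Matrix (Fin nR) (Fin nT) ℂ) : ℝ :=
  ‖LinearMap.toContinuousLinearMap (Matrix.toEuclideanLin g)‖

/-- The centered circularly-symmetric complex Gaussian law on `ℂ` with variance `2v`: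
real and imaginary parts are independent centered real Gaussians of variance `v`. -/
noncomputable def complexGaussian (v : NNReal) : Measure ℂ :=
  Measure.map (fun p : ℝ × ℝ => (p.1 : ℂ) + p.2 * Complex.I)
    ((ProbabilityTheory.gaussianReal 0 v).prod (ProbabilityTheory.gaussianReal 0 v))

section Aux2
open Real
open scoped NNReal

lemma measurable_mk_complex : Measurable (fun p : ℝ × ℝ => (p.1 : ℂ) + p.2 * Complex.I) :=
  (Complex.measurable_ofReal.comp measurable_fst).add
    ((Complex.measurable_ofReal.comp measurable_snd).mul_const Complex.I)

instance (v : NNReal) : IsProbabilityMeasure (complexGaussian v) :=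
  Measure.isProbabilityMeasure_map measurable_mk_complex.aemeasurable

lemma norm_mk_complex_sq (x y : ℝ) : ‖(x : ℂ) + y * Complex.I‖ ^ 2 = x ^ 2 + y ^ 2 := by
  rw [← Complex.normSq_add_mul_I x y]
  rw [Complex.sq_norm]

lemma comp_norm_sq (s : ℝ) : (fun p : ℝ × ℝ => Real.exp (s * ‖(p.1 : ℂ) + p.2 * Complex.I‖ ^ 2))
    = fun p : ℝ × ℝ => Real.exp (s * p.1 ^ 2) * Real.exp (s * p.2 ^ 2) := by
  funext p
  rw [norm_mk_complex_sq, ← Real.exp_add]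
  ring_nf

lemma aux_integrable_exp_sq_complexGaussian (v : NNReal) (hv : 0 < (v : ℝ)) {s : ℝ}
    (hs : 2 * s * v < 1) :
    Integrable (fun z => Real.exp (s * ‖z‖ ^ 2)) (complexGaussian v) := by
  rw [complexGaussian, integrable_map_measure
    (by apply Measurable.aestronglyMeasurable; fun_prop)
    measurable_mk_complex.aemeasurable]
  have : ((fun z : ℂ => Real.exp (s * ‖z‖ ^ 2)) ∘ (fun p : ℝ × ℝ => (p.1 : ℂ) + p.2 * Complex.I))
      = fun p : ℝ × ℝ => Real.exp (s * p.1 ^ 2) * Real.exp (s * p.2 ^ 2) := comp_norm_sq s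
  rw [this]
  exact (aux_integrable_exp_sq_gaussian v hv hs).mul_prod (aux_integrable_exp_sq_gaussian v hv hs)

lemma aux_integral_exp_sq_complexGaussian (v : NNReal) (hv : 0 < (v : ℝ)) {s : ℝ}
    (hs : 2 * s * v < 1) :
    ∫ z, Real.exp (s * ‖z‖ ^ 2) ∂(complexGaussian v) = (1 - 2 * s * v)⁻¹ := by
  rw [complexGaussian, integral_map measurable_mk_complex.aemeasurable
    (by apply Measurable.aestronglyMeasurable; fun_prop)]
  have : (fun p : ℝ × ℝ => Real.exp (s * ‖(p.1 : ℂ) + p.2 * Complex.I‖ ^ 2))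
      = fun p : ℝ × ℝ => Real.exp (s * p.1 ^ 2) * Real.exp (s * p.2 ^ 2) := comp_norm_sq s
  rw [this, integral_prod_mul (f := fun x : ℝ => Real.exp (s * x ^ 2))
    (g := fun x : ℝ => Real.exp (s * x ^ 2)), aux_integral_exp_sq_gaussian v hv hs]
  rw [← mul_inv, Real.mul_self_sqrt (by linarith)]

lemma aux_pi_integral {E : Type*} [MeasurableSpace E] (m : Measure E) [IsProbabilityMeasure m]
    (ι : Type*) [Fintype ι] (f : E → ℝ) :
    ∫ x : ι → E, ∏ i, f (x i) ∂(Measure.pi fun _ => m) = (∫ x, f x ∂m) ^ (Fintype.card ι) := by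
  letI : MeasureSpace E := ⟨m⟩
  exact MeasureTheory.integral_fintype_prod_eq_pow (ι := ι) f

lemma aux_pi_integrable {E : Type*} [MeasurableSpace E] (m : Measure E) [IsProbabilityMeasure m]
    (ι : Type*) [Fintype ι] (f : E → ℝ) (hf : Integrable f m) :
    Integrable (fun x : ι → E => ∏ i, f (x i)) (Measure.pi fun _ => m) := by
  letI : MeasureSpace E := ⟨m⟩
  exact MeasureTheory.Integrable.fintype_prod (f := fun _ : ι => f) (fun i => hf)

lemma exp_mul_sum_norm (nR : ℕ) (s : ℝ) :
    (fun x : Fin nR → ℂ => Real.exp (s * ∑ j, ‖x j‖ ^ 2))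
      = fun x => ∏ j, Real.exp (s * ‖x j‖ ^ 2) := by
  funext x
  rw [Finset.mul_sum, Real.exp_sum]

lemma aux_integral_exp_pi (nR : ℕ) (v : NNReal) (hv : 0 < (v : ℝ)) {s : ℝ}
    (hs : 2 * s * v < 1) :
    ∫ x : Fin nR → ℂ, Real.exp (s * ∑ j, ‖x j‖ ^ 2)
        ∂(Measure.pi fun _ : Fin nR => complexGaussian v)
      = ((1 - 2 * s * v)⁻¹) ^ nR := by
  rw [exp_mul_sum_norm, aux_pi_integral (complexGaussian v) (Fin nR)
    (fun z => Real.exp (s * ‖z‖ ^ 2)), aux_integral_exp_sq_complexGaussian v hv hs,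
    Fintype.card_fin]

lemma aux_integrable_exp_pi (nR : ℕ) (v : NNReal) (hv : 0 < (v : ℝ)) {s : ℝ}
    (hs : 2 * s * v < 1) :
    Integrable (fun x : Fin nR → ℂ => Real.exp (s * ∑ j, ‖x j‖ ^ 2))
      (Measure.pi fun _ : Fin nR => complexGaussian v) := by
  rw [exp_mul_sum_norm]
  exact aux_pi_integrable (complexGaussian v) (Fin nR) _
    (aux_integrable_exp_sq_complexGaussian v hv hs)

lemma aux_iIndepFun_congr {Ω : Type*} [MeasurableSpace Ω] {μ : Measure Ω} {ι : Type*}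
    [Countable ι] {β : ι → Type*} [m : ∀ i, MeasurableSpace (β i)] {f g : ∀ i, Ω → β i}
    (h : iIndepFun f μ) (hfg : ∀ i, f i =ᵐ[μ] g i) : iIndepFun g μ := by
  rw [iIndepFun_iff_measure_inter_preimage_eq_mul] at h ⊢
  intro S sets hsets
  have hae : ∀ᵐ ω ∂μ, ∀ i, f i ω = g i ω := ae_all_iff.2 hfg
  have h1 : ∀ i, μ (g i ⁻¹' sets i) = μ (f i ⁻¹' sets i) := fun i => measure_congr <| by
    rw [Filter.eventuallyEq_set]
    filter_upwards [hfg i] with ω hω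
    simp [Set.mem_preimage, hω]
  have h2 : μ (⋂ i ∈ S, g i ⁻¹' sets i) = μ (⋂ i ∈ S, f i ⁻¹' sets i) := measure_congr <| by
    rw [Filter.eventuallyEq_set]
    filter_upwards [hae] with ω hω
    simp only [Set.mem_iInter, Set.mem_preimage, hω]
  rw [h2, h S hsets]
  exact Finset.prod_congr rfl fun i _ => (h1 i).symm

lemma aux_opnorm {nR nT : ℕ} (g : Matrix (Fin nR) (Fin nT) ℂ) (a : ℝ) (ha : 0 ≤ a)
    (hg : ‖LinearMap.toContinuousLinearMap (Matrix.toEuclideanLin g)‖ ≤ a)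
    (v : Fin nT → ℂ) : ∑ j, ‖g.mulVec v j‖ ^ 2 ≤ a ^ 2 * ∑ j, ‖v j‖ ^ 2 := by
  have h2 : ‖Matrix.toEuclideanLin g ((WithLp.equiv 2 (Fin nT → ℂ)).symm v)‖
      = Real.sqrt (∑ j, ‖g.mulVec v j‖ ^ 2) := by
    rw [WithLp.equiv_symm_apply, Matrix.toEuclideanLin_apply_piLp_toLp, EuclideanSpace.norm_eq]
  have h3 : ‖(WithLp.equiv 2 (Fin nT → ℂ)).symm v‖ = Real.sqrt (∑ j, ‖v j‖ ^ 2) := by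
    rw [EuclideanSpace.norm_eq]
    simp [WithLp.equiv_symm_apply, PiLp.toLp_apply]
  have h1 : ‖Matrix.toEuclideanLin g ((WithLp.equiv 2 (Fin nT → ℂ)).symm v)‖
      ≤ a * ‖(WithLp.equiv 2 (Fin nT → ℂ)).symm v‖ :=
    le_trans ((LinearMap.toContinuousLinearMap (Matrix.toEuclideanLin g)).le_opNorm _)
      (by gcongr)
  rw [h2, h3] at h1
  have h4 : (0:ℝ) ≤ ∑ j, ‖g.mulVec v j‖ ^ 2 := Finset.sum_nonneg fun j _ => sq_nonneg _
  have h5 : (0:ℝ) ≤ ∑ j, ‖v j‖ ^ 2 := Finset.sum_nonneg fun j _ => sq_nonneg _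
  calc ∑ j, ‖g.mulVec v j‖ ^ 2 = Real.sqrt (∑ j, ‖g.mulVec v j‖ ^ 2) ^ 2 := (Real.sq_sqrt h4).symm
    _ ≤ (a * Real.sqrt (∑ j, ‖v j‖ ^ 2)) ^ 2 := by
        apply pow_le_pow_left₀ (Real.sqrt_nonneg _) h1
    _ = a ^ 2 * ∑ j, ‖v j‖ ^ 2 := by rw [mul_pow, Real.sq_sqrt h5]

lemma aux_algebra (σ : ℝ) (hσ : 0 < σ) (nR n : ℕ) (hnR : 1 ≤ nR) (hn : 1 ≤ n) :
    Real.exp (-(σ ^ 2 * (σ ^ 2 * nR + 1))⁻¹ * ((n : ℝ) * (nR * σ ^ 2 + 1)))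
      * ((1 + 1 / (σ ^ 2 * nR)) ^ nR) ^ n
    ≤ ((1 + 1 / (σ ^ 2 * nR)) * (2 : ℝ) ^ (-(1 / (σ ^ 2 * nR * Real.log 2)))) ^ n := by
  have hnR0 : (0:ℝ) < nR := by exact_mod_cast hnR
  set x : ℝ := 1 / (σ ^ 2 * nR) with hxdef
  have hx : 0 < x := by rw [hxdef]; positivity
  have hl2 : (0:ℝ) < Real.log 2 := Real.log_pos (by norm_num)
  have h2 : (2 : ℝ) ^ (-(1 / (σ ^ 2 * nR * Real.log 2))) = Real.exp (-x) := by
    rw [Real.rpow_def_of_pos (by norm_num : (0:ℝ) < 2)]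
    congr 1
    rw [hxdef]
    field_simp
  have hexp : -(σ ^ 2 * (σ ^ 2 * nR + 1))⁻¹ * ((n : ℝ) * (nR * σ ^ 2 + 1))
      = (↑(n * nR) : ℝ) * (-x) := by
    rw [hxdef]
    push_cast
    field_simp
  rw [h2, hexp, Real.exp_nat_mul, ← pow_mul]
  have hcomb : Real.exp (-x) ^ (n * nR) * (1 + x) ^ (nR * n)
      = ((1 + x) * Real.exp (-x)) ^ (n * nR) := by
    rw [mul_pow, Nat.mul_comm nR n]
    ring
  rw [hcomb]
  have hb0 : 0 < (1 + x) * Real.exp (-x) := by positivity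
  have hb1 : (1 + x) * Real.exp (-x) ≤ 1 := by
    have h : (1 + x) * Real.exp (-x) ≤ Real.exp x * Real.exp (-x) :=
      mul_le_mul_of_nonneg_right (by linarith [Real.add_one_le_exp x]) (Real.exp_pos _).le
    rwa [← Real.exp_add, add_neg_cancel, Real.exp_zero] at h
  calc ((1 + x) * Real.exp (-x)) ^ (n * nR) ≤ ((1 + x) * Real.exp (-x)) ^ n :=
        pow_le_pow_of_le_one hb0.le hb1 (Nat.le_mul_of_pos_right n (by omega))
    _ = _ := rfl
end Aux2

/-- Let `‖g‖ ≤ a` (operator norm), let `t_1, …, t_n` satisfy the power constraint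
`(1/n) ∑ᵢ ‖tᵢ‖² ≤ P`, and let `ξ_1, …, ξ_n` be i.i.d. centered circularly-symmetric complex
Gaussian vectors in `ℂ^{N_R}` with covariance `σ² I` (each coordinate having independent
real and imaginary parts of variance `σ²/2`). With `Z_i = g t_i + ξ_i`,
`ℙ[∑ᵢ ‖Zᵢ‖² ≥ n(2a²P + 2N_Rσ² + 2)] ≤ ((1 + 1/(σ²N_R)) · 2^{-1/(σ²N_R ln 2)})ⁿ`. -/
theorem output_power_tail_bound {Ω : Type*} [MeasurableSpace Ω] (μ : Measure Ω)
    [IsProbabilityMeasure μ]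
    (nT nR n : ℕ) (hnT : 1 ≤ nT) (hnR : 1 ≤ nR) (hn : 1 ≤ n)
    (a P σ : ℝ) (ha : 0 < a) (hP : 0 < P) (hσ : 0 < σ)
    (g : Matrix (Fin nR) (Fin nT) ℂ) (hg : matOpNorm g ≤ a)
    (t : Fin n → Fin nT → ℂ)
    (ht : (n : ℝ)⁻¹ * ∑ i, ∑ j, ‖t i j‖ ^ 2 ≤ P)
    (ξ : Fin n → Ω → Fin nR → ℂ)
    (hindep : iIndepFun ξ μ)
    (hlaw : ∀ i, Measure.map (ξ i) μ =
      Measure.pi fun _ : Fin nR => complexGaussian (Real.toNNReal (σ ^ 2 / 2))) :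
    μ {ω | (n : ℝ) * (2 * a ^ 2 * P + 2 * nR * σ ^ 2 + 2) ≤
        ∑ i, ∑ j, ‖g.mulVec (t i) j + ξ i ω j‖ ^ 2} ≤
      ENNReal.ofReal (((1 + 1 / (σ ^ 2 * nR)) *
        (2 : ℝ) ^ (-(1 / (σ ^ 2 * nR * Real.log 2)))) ^ n) := by
  -- basic positivity facts
  have hσ2 : (0:ℝ) < σ ^ 2 := by positivity
  have hnR0 : (0:ℝ) < nR := by exact_mod_cast hnR
  have hn0 : (0:ℝ) < n := by exact_mod_cast hn
  set v : NNReal := Real.toNNReal (σ ^ 2 / 2) with hvdef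
  have hvr : (v : ℝ) = σ ^ 2 / 2 := Real.coe_toNNReal _ (by positivity)
  have hv0 : 0 < (v : ℝ) := by rw [hvr]; positivity
  set s : ℝ := (σ ^ 2 * (σ ^ 2 * nR + 1))⁻¹ with hsdef
  have hs0 : 0 < s := by rw [hsdef]; positivity
  have h2sv : 2 * s * (v : ℝ) = (σ ^ 2 * nR + 1)⁻¹ := by
    rw [hsdef, hvr]; field_simp
  have hs1 : 2 * s * (v : ℝ) < 1 := by
    rw [h2sv]
    rw [inv_lt_one_iff₀]
    right; nlinarith
  have hinv : (1 - 2 * s * (v : ℝ))⁻¹ = 1 + 1 / (σ ^ 2 * nR) := by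
    rw [h2sv]
    rw [show (1 : ℝ) - (σ ^ 2 * nR + 1)⁻¹ = (σ ^ 2 * nR) / (σ ^ 2 * nR + 1) by
      field_simp; ring]
    rw [inv_div]
    field_simp
  -- the noise coordinates, measurable modification
  have hξae : ∀ i, AEMeasurable (ξ i) μ := fun i =>
    aemeasurable_of_map_neZero (by rw [hlaw i]; infer_instance)
  set ξ' : Fin n → Ω → Fin nR → ℂ := fun i => (hξae i).mk (ξ i) with hξ'def
  have hmeas' : ∀ i, Measurable (ξ' i) := fun i => (hξae i).measurable_mk
  have hae : ∀ i, ξ i =ᵐ[μ] ξ' i := fun i => (hξae i).ae_eq_mk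
  have hmap' : ∀ i, Measure.map (ξ' i) μ =
      Measure.pi fun _ : Fin nR => complexGaussian v := fun i =>
    (Measure.map_congr (hae i)).symm.trans (hlaw i)
  -- the squared norms
  have hF : Measurable (fun x : Fin nR → ℂ => ∑ j, ‖x j‖ ^ 2) := by fun_prop
  set W : Fin n → Ω → ℝ := fun i ω => ∑ j, ‖ξ' i ω j‖ ^ 2 with hWdef
  have hWmeas : ∀ i, Measurable (W i) := fun i => hF.comp (hmeas' i)
  have hWindep : iIndepFun W μ :=
    (aux_iIndepFun_congr hindep hae).comp (fun _ => fun x : Fin nR → ℂ => ∑ j, ‖x j‖ ^ 2)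
      (fun _ => hF)
  -- mgf of each W i
  have hmgf : ∀ i, mgf (W i) μ s = ((1 - 2 * s * (v:ℝ))⁻¹) ^ nR := by
    intro i
    have h1 : mgf (W i) μ s
        = ∫ x : Fin nR → ℂ, Real.exp (s * ∑ j, ‖x j‖ ^ 2) ∂(Measure.map (ξ' i) μ) := by
      rw [integral_map (hmeas' i).aemeasurable
        (by apply Measurable.aestronglyMeasurable; fun_prop)]
      rfl
    rw [h1, hmap' i, aux_integral_exp_pi nR v hv0 hs1]
  have hint : ∀ i, Integrable (fun ω => Real.exp (s * W i ω)) μ := by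
    intro i
    have h1 : Integrable (fun x : Fin nR → ℂ => Real.exp (s * ∑ j, ‖x j‖ ^ 2))
        (Measure.map (ξ' i) μ) := by
      rw [hmap' i]; exact aux_integrable_exp_pi nR v hv0 hs1
    exact (integrable_map_measure (by apply Measurable.aestronglyMeasurable; fun_prop)
      (hmeas' i).aemeasurable).mp h1
  -- Chernoff bound
  set ε : ℝ := (n : ℝ) * ((nR : ℝ) * σ ^ 2 + 1) with hεdef
  have hintsum : Integrable (fun ω => Real.exp (s * (∑ i, W i) ω)) μ :=
    hWindep.integrable_exp_mul_sum hWmeas (fun i _ => hint i)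
  have hchernoff := measure_ge_le_exp_mul_mgf (μ := μ) (X := ∑ i, W i) ε hs0.le hintsum
  rw [hWindep.mgf_sum hWmeas Finset.univ] at hchernoff
  have hprod : ∏ i : Fin n, mgf (W i) μ s = (((1 - 2 * s * (v:ℝ))⁻¹) ^ nR) ^ n := by
    rw [Finset.prod_congr rfl fun i _ => hmgf i, Finset.prod_const, Finset.card_univ,
      Fintype.card_fin]
  rw [hprod] at hchernoff
  -- event inclusion
  have hsub : {ω | (n : ℝ) * (2 * a ^ 2 * P + 2 * nR * σ ^ 2 + 2) ≤
        ∑ i, ∑ j, ‖g.mulVec (t i) j + ξ i ω j‖ ^ 2}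
      ⊆ {ω | ε ≤ ∑ i, ∑ j, ‖ξ i ω j‖ ^ 2} := by
    intro ω hω
    simp only [Set.mem_setOf_eq] at hω ⊢
    have hterm : ∀ i : Fin n, ∑ j, ‖g.mulVec (t i) j + ξ i ω j‖ ^ 2
        ≤ ∑ j, (2 * ‖g.mulVec (t i) j‖ ^ 2 + 2 * ‖ξ i ω j‖ ^ 2) := by
      intro i
      refine Finset.sum_le_sum fun j _ => ?_
      have h1 := norm_add_le (g.mulVec (t i) j) (ξ i ω j)
      nlinarith [mul_self_le_mul_self (norm_nonneg (g.mulVec (t i) j + ξ i ω j)) h1,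
        sq_nonneg (‖g.mulVec (t i) j‖ - ‖ξ i ω j‖)]
    have hupper : ∑ i, ∑ j, ‖g.mulVec (t i) j + ξ i ω j‖ ^ 2
        ≤ 2 * (∑ i, ∑ j, ‖g.mulVec (t i) j‖ ^ 2) + 2 * (∑ i, ∑ j, ‖ξ i ω j‖ ^ 2) := by
      calc ∑ i, ∑ j, ‖g.mulVec (t i) j + ξ i ω j‖ ^ 2
          ≤ ∑ i, ∑ j, (2 * ‖g.mulVec (t i) j‖ ^ 2 + 2 * ‖ξ i ω j‖ ^ 2) :=
            Finset.sum_le_sum fun i _ => hterm i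
        _ = 2 * (∑ i, ∑ j, ‖g.mulVec (t i) j‖ ^ 2) + 2 * (∑ i, ∑ j, ‖ξ i ω j‖ ^ 2) := by
            simp_rw [Finset.sum_add_distrib, Finset.mul_sum]
    have hA : ∑ i, ∑ j, ‖g.mulVec (t i) j‖ ^ 2 ≤ a ^ 2 * ∑ i, ∑ j, ‖t i j‖ ^ 2 := by
      calc ∑ i, ∑ j, ‖g.mulVec (t i) j‖ ^ 2
          ≤ ∑ i, a ^ 2 * ∑ j, ‖t i j‖ ^ 2 :=
            Finset.sum_le_sum fun i _ => aux_opnorm g a ha.le hg (t i)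
        _ = a ^ 2 * ∑ i, ∑ j, ‖t i j‖ ^ 2 := by rw [Finset.mul_sum]
    have hB : ∑ i, ∑ j, ‖t i j‖ ^ 2 ≤ (n : ℝ) * P := by
      rw [inv_mul_le_iff₀ hn0] at ht
      linarith [ht]
    have hAB : a ^ 2 * ∑ i, ∑ j, ‖t i j‖ ^ 2 ≤ a ^ 2 * ((n:ℝ) * P) :=
      mul_le_mul_of_nonneg_left hB (sq_nonneg a)
    rw [hεdef]
    linarith [hω, hupper, hA, hAB]
  have hcongr : μ {ω | ε ≤ ∑ i, ∑ j, ‖ξ i ω j‖ ^ 2} = μ {ω | ε ≤ (∑ i, W i) ω} := by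
    apply measure_congr
    rw [Filter.eventuallyEq_set]
    filter_upwards [ae_all_iff.2 hae] with ω hω
    have hx : ∑ i, ∑ j, ‖ξ i ω j‖ ^ 2 = (∑ i, W i) ω := by
      rw [Finset.sum_apply]
      exact Finset.sum_congr rfl fun i _ => by rw [hω i]
    simp only [Set.mem_setOf_eq, hx]
  -- conclude
  calc μ {ω | (n : ℝ) * (2 * a ^ 2 * P + 2 * nR * σ ^ 2 + 2) ≤
        ∑ i, ∑ j, ‖g.mulVec (t i) j + ξ i ω j‖ ^ 2}
      ≤ μ {ω | ε ≤ ∑ i, ∑ j, ‖ξ i ω j‖ ^ 2} := measure_mono hsub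
    _ = μ {ω | ε ≤ (∑ i, W i) ω} := hcongr
    _ = ENNReal.ofReal ((μ {ω | ε ≤ (∑ i, W i) ω}).toReal) :=
        (ENNReal.ofReal_toReal (measure_ne_top μ _)).symm
    _ ≤ ENNReal.ofReal (Real.exp (-s * ε) * (((1 - 2 * s * (v:ℝ))⁻¹) ^ nR) ^ n) :=
        ENNReal.ofReal_le_ofReal hchernoff
    _ ≤ ENNReal.ofReal (((1 + 1 / (σ ^ 2 * nR)) *
        (2 : ℝ) ^ (-(1 / (σ ^ 2 * nR * Real.log 2)))) ^ n) := by
        apply ENNReal.ofReal_le_ofReal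
        rw [hinv, hsdef, hεdef]
        exact aux_algebra σ hσ nR n hnR hn
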